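/- Let G be a finite simple graph, let M be a maximum matching of G, and let v be a vertex of G not covered by M. Then v is a winning opening move for the first player in the snake-in-the-box game on G, i.e., Win({v}, v) fails. -/
import Mathlib


/-- `M` is a matching of `G`: a set of edges of `G`, no two of which share a vertex. -/
def IsMatching {V : Type*} (G : SimpleGraph V) (M : Finset (Sym2 V)) : Prop :=
  (∀ e ∈ M, e ∈ G.edgeSet) ∧
  ∀ e ∈ M, ∀ f ∈ M, e ≠ f → ∀ v : V, v ∈ e → v ∉ f

/-- The vertex `v` is covered by the matching `M`, i.e. it is an endpoint of an edge of `M`. -/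
def Covers {V : Type*} (M : Finset (Sym2 V)) (v : V) : Prop := ∃ e ∈ M, v ∈ e

/-- `M` is a maximum matching of `G`: a matching of maximum cardinality among all matchings. -/
def IsMaximumMatching {V : Type*} (G : SimpleGraph V) (M : Finset (Sym2 V)) : Prop :=
  IsMatching G M ∧ ∀ M' : Finset (Sym2 V), IsMatching G M' → M'.card ≤ M.card

/-- The snake-in-the-box winning predicate: `Win G S v` means the player about to move from
the position with visited set `S` and current vertex `v ∈ S` has a winning strategy.
`Win G S v` holds iff there is `w` adjacent to `v`, not yet visited, with `¬ Win G (insert w S) w`. -/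
def Win {V : Type*} [Fintype V] [DecidableEq V] (G : SimpleGraph V) (S : Finset V) (v : V) :
    Prop :=
  ∃ w : V, ∃ _ : G.Adj v w, ∃ _ : w ∉ S, ¬ Win G (insert w S) w
termination_by Sᶜ.card
decreasing_by
  simp only [Finset.compl_insert]
  exact Finset.card_erase_lt_of_mem (Finset.mem_compl.mpr (by assumption))

lemma key_lemma {V : Type*} [Fintype V] [DecidableEq V] (G : SimpleGraph V) :
    ∀ (n : ℕ) (S : Finset V) (v : V) (M : Finset (Sym2 V)), Sᶜ.card ≤ n →
    IsMaximumMatching G M → ¬ Covers M v → v ∈ S →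
    (∀ a b : V, s(a,b) ∈ M → a ∈ S → a ≠ v → b ∈ S) → ¬ Win G S v := by
  intro n
  induction n with
  | zero =>
    intro S v M hcard _ _ _ _ hwin
    rw [Win] at hwin
    obtain ⟨w, hadj, hwS, hnw⟩ := hwin
    have : w ∈ Sᶜ := Finset.mem_compl.mpr hwS
    simp [Finset.card_eq_zero.mp (Nat.le_zero.mp hcard)] at this
  | succ n ih =>
    intro S v M hcard hM hv hvS hclo hwin
    rw [Win] at hwin
    obtain ⟨w, hadj, hwS, hnw⟩ := hwin
    -- w must be covered by M
    have hwv : w ≠ v := fun h => hwS (h ▸ hvS)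
    have hwcov : Covers M w := by
      by_contra hwc
      have hvwM : s(v,w) ∉ M := fun h => hv ⟨_, h, Sym2.mem_mk_left _ _⟩
      have hmatch : IsMatching G (insert s(v,w) M) := by
        constructor
        · intro e he
          rcases Finset.mem_insert.mp he with rfl | he
          · exact G.mem_edgeSet.mpr hadj
          · exact hM.1.1 e he
        · intro e he f hf hef z hze hzf
          rcases Finset.mem_insert.mp he with rfl | he2 <;>
            rcases Finset.mem_insert.mp hf with hfe | hf2
          · exact hef hfe.symm
          · rcases Sym2.mem_iff.mp hze with rfl | rfl
            · exact hv ⟨f, hf2, hzf⟩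
            · exact hwc ⟨f, hf2, hzf⟩
          · subst hfe
            rcases Sym2.mem_iff.mp hzf with rfl | rfl
            · exact hv ⟨e, he2, hze⟩
            · exact hwc ⟨e, he2, hze⟩
          · exact hM.1.2 e he2 f hf2 hef z hze hzf
      have hle := hM.2 _ hmatch
      rw [Finset.card_insert_of_notMem hvwM] at hle
      omega
    obtain ⟨e, heM, hwe⟩ := hwcov
    obtain ⟨y, rfl⟩ := Sym2.mem_iff_exists.mp hwe
    have hadjwy : G.Adj w y := G.mem_edgeSet.mp (hM.1.1 _ heM)
    have hyw : y ≠ w := hadjwy.ne'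
    have hyv : y ≠ v := fun h => hv ⟨_, heM, h ▸ Sym2.mem_mk_right _ _⟩
    have hyS : y ∉ S := fun h =>
      hwS (hclo y w (by rwa [Sym2.eq_swap]) h hyv)
    -- build the new matching
    set M' : Finset (Sym2 V) := insert s(v,w) (M.erase s(w,y)) with hM'def
    have hvwM : s(v,w) ∉ M := fun h => hv ⟨_, h, Sym2.mem_mk_left _ _⟩
    have hvwE : s(v,w) ∉ M.erase s(w,y) := fun h => hvwM (Finset.mem_erase.mp h).2
    have hcardM' : M'.card = M.card := by
      rw [hM'def, Finset.card_insert_of_notMem hvwE, Finset.card_erase_of_mem heM]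
      have : 1 ≤ M.card := Finset.card_pos.mpr ⟨_, heM⟩
      omega
    have hmatchM' : IsMatching G M' := by
      constructor
      · intro f hf
        rcases Finset.mem_insert.mp hf with rfl | hf
        · exact G.mem_edgeSet.mpr hadj
        · exact hM.1.1 _ (Finset.mem_erase.mp hf).2
      · intro e1 he1 f hf hef z hze hzf
        rcases Finset.mem_insert.mp he1 with rfl | he2 <;>
          rcases Finset.mem_insert.mp hf with hfe | hf2
        · exact hef hfe.symm
        · obtain ⟨hfne, hfM⟩ := Finset.mem_erase.mp hf2
          rcases Sym2.mem_iff.mp hze with rfl | rfl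
          · exact hv ⟨f, hfM, hzf⟩
          · exact hM.1.2 _ heM f hfM hfne.symm z (Sym2.mem_mk_left _ _) hzf
        · subst hfe
          obtain ⟨hene, heM'⟩ := Finset.mem_erase.mp he2
          rcases Sym2.mem_iff.mp hzf with rfl | rfl
          · exact hv ⟨e1, heM', hze⟩
          · exact hM.1.2 _ heM e1 heM' hene.symm z (Sym2.mem_mk_left _ _) hze
        · obtain ⟨_, he1M⟩ := Finset.mem_erase.mp he2
          obtain ⟨_, hfM⟩ := Finset.mem_erase.mp hf2
          exact hM.1.2 e1 he1M f hfM hef z hze hzf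
    have hmaxM' : IsMaximumMatching G M' := by
      refine ⟨hmatchM', fun M'' hM'' => ?_⟩
      rw [hcardM']
      exact hM.2 M'' hM''
    have hyunc : ¬ Covers M' y := by
      rintro ⟨f, hf, hyf⟩
      rcases Finset.mem_insert.mp hf with rfl | hf
      · rcases Sym2.mem_iff.mp hyf with rfl | rfl
        · exact hyv rfl
        · exact hyw rfl
      · obtain ⟨hfne, hfM⟩ := Finset.mem_erase.mp hf
        exact hM.1.2 _ heM f hfM hfne.symm y (Sym2.mem_mk_right _ _) hyf
    have hcloS' : ∀ a b : V, s(a,b) ∈ M' → a ∈ insert y (insert w S) → a ≠ y →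
        b ∈ insert y (insert w S) := by
      intro a b hab haS hay
      rcases Finset.mem_insert.mp hab with heq | hab
      · rcases Sym2.eq_iff.mp heq with ⟨rfl, rfl⟩ | ⟨rfl, rfl⟩
        · exact Finset.mem_insert_of_mem (Finset.mem_insert_self _ _)
        · exact Finset.mem_insert_of_mem (Finset.mem_insert_of_mem hvS)
      · obtain ⟨hne, habM⟩ := Finset.mem_erase.mp hab
        have haw : a ≠ w := fun h =>
          hM.1.2 _ heM _ habM hne.symm w (Sym2.mem_mk_left _ _) (h ▸ Sym2.mem_mk_left _ _)
        have haS' : a ∈ S := by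
          rcases Finset.mem_insert.mp haS with rfl | h
          · exact absurd rfl hay
          · rcases Finset.mem_insert.mp h with rfl | h
            · exact absurd rfl haw
            · exact h
        have hav : a ≠ v := fun h => hv ⟨_, habM, h ▸ Sym2.mem_mk_left _ _⟩
        exact Finset.mem_insert_of_mem (Finset.mem_insert_of_mem (hclo a b habM haS' hav))
    -- show the position after the opponent's move is winning
    apply hnw
    rw [Win]
    refine ⟨y, hadjwy, by simp [hyw, hyS], ?_⟩
    apply ih _ y M' ?_ hmaxM' hyunc (Finset.mem_insert_self _ _) hcloS'
    · have h1 : (insert y (insert w S))ᶜ = (Sᶜ.erase w).erase y := by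
        simp [Finset.compl_insert]
      rw [h1]
      have hwc : w ∈ Sᶜ := Finset.mem_compl.mpr hwS
      have h2 : (Sᶜ.erase w).card = Sᶜ.card - 1 := Finset.card_erase_of_mem hwc
      have h3 : ((Sᶜ.erase w).erase y).card ≤ (Sᶜ.erase w).card := Finset.card_erase_le
      omega

/-- If `M` is a maximum matching of a finite simple graph `G` and `v` is uncovered by `M`,
then `v` is a winning opening move for the first player in snake-in-the-box on `G`. -/
theorem uncovered_vertex_is_winning_opening {V : Type*} [Fintype V] [DecidableEq V]
    (G : SimpleGraph V) (M : Finset (Sym2 V)) (hM : IsMaximumMatching G M) (v : V)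
    (hv : ¬ Covers M v) : ¬ Win G {v} v := by
  apply key_lemma G ({v} : Finset V)ᶜ.card _ v M le_rfl hM hv (Finset.mem_singleton_self v)
  intro a b _ haS hav
  exact absurd (Finset.mem_singleton.mp haS) hav
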